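/- If μ is a finite Borel measure on T that is singular with respect to Lebesgue measure, then the Poisson integral of μ tends to 0 almost everywhere as r increases to 1: for almost every x ∈ (−π, π], (P_r * μ)(x) = ∫_{-π}^{π} P_r(x − t) dμ(t) → 0 as r ↑ 1. -/

import Mathlib

open MeasureTheory Filter Real Set

/-- The Poisson kernel `P_r(t) = (1 - r²)/(1 - 2r cos t + r²)` (a `2π`-periodic function
of `t`, for `0 < r < 1`). -/
noncomputable def poissonKernelReal (r t : ℝ) : ℝ :=
  (1 - r ^ 2) / (1 - 2 * r * Real.cos t + r ^ 2)

lemma pk_denom_pos {r : ℝ} (hr0 : 0 ≤ r) (hr1 : r < 1) (t : ℝ) :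
    0 < 1 - 2 * r * Real.cos t + r ^ 2 := by
  nlinarith [Real.cos_le_one t, Real.neg_one_le_cos t, sq_nonneg (1 - r)]

lemma pk_nonneg {r : ℝ} (hr0 : 0 ≤ r) (hr1 : r < 1) (t : ℝ) :
    0 ≤ poissonKernelReal r t :=
  div_nonneg (by nlinarith) (pk_denom_pos hr0 hr1 t).le

lemma pk_le_cap {r : ℝ} (hr0 : 0 ≤ r) (hr1 : r < 1) (t : ℝ) :
    poissonKernelReal r t ≤ 2 / (1 - r) := by
  rw [poissonKernelReal, div_le_div_iff₀ (pk_denom_pos hr0 hr1 t) (by linarith)]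
  nlinarith [Real.cos_le_one t, mul_nonneg hr0 (sub_nonneg.2 (Real.cos_le_one t)),
    mul_nonneg (sq_nonneg (1 - r)) (by linarith : (0:ℝ) ≤ 1 - r)]

lemma pk_le_far {r s h : ℝ} (hr0 : 1/2 ≤ r) (hr1 : r < 1)
    (hs : |s| ≤ 2 * π) (hh : 0 < h)
    (h1 : h ≤ |s|) (h2 : h ≤ |s - 2 * π|) (h3 : h ≤ |s + 2 * π|) :
    poissonKernelReal r s ≤ π ^ 2 * (1 - r) / h ^ 2 := by
  set d : ℝ := min |s| (min |s - 2 * π| |s + 2 * π|) with hd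
  have hd0 : 0 ≤ d := le_min (abs_nonneg _) (le_min (abs_nonneg _) (abs_nonneg _))
  have hhd : h ≤ d := le_min h1 (le_min h2 h3)
  have hcos : Real.cos d = Real.cos s := by
    rcases min_cases |s| (min |s - 2 * π| |s + 2 * π|) with ⟨h', _⟩ | ⟨h', _⟩
    · rw [hd, h', Real.cos_abs]
    · rw [hd, h']
      rcases min_cases |s - 2 * π| |s + 2 * π| with ⟨h'', _⟩ | ⟨h'', _⟩
      · rw [h'', Real.cos_abs, Real.cos_sub_two_pi]
      · rw [h'', Real.cos_abs, Real.cos_add_two_pi]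
  have hdpi : d ≤ π := by
    have hpi := Real.pi_pos
    rcases le_total |s| π with h' | h'
    · exact (min_le_left _ _).trans h'
    · rcases le_total 0 s with hs0 | hs0
      · rw [abs_of_nonneg hs0] at h' hs
        have h'' : |s - 2 * π| ≤ π := by rw [abs_of_nonpos (by linarith)]; linarith
        exact le_trans (le_trans (min_le_right _ _) (min_le_left _ _)) h''
      · rw [abs_of_nonpos hs0] at h' hs
        have h'' : |s + 2 * π| ≤ π := by rw [abs_of_nonneg (by linarith)]; linarith
        exact le_trans (le_trans (min_le_right _ _) (min_le_right _ _)) h''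
  have hkey : 2 / π ^ 2 * d ^ 2 ≤ 1 - Real.cos s := by
    have := Real.cos_le_one_sub_mul_cos_sq (x := d) (by rwa [abs_of_nonneg hd0])
    rw [hcos] at this; linarith
  have hh2 : h ^ 2 ≤ d ^ 2 := by nlinarith
  have hdenom : 2 / π ^ 2 * h ^ 2 ≤ 1 - 2 * r * Real.cos s + r ^ 2 := by
    have hπ := Real.pi_pos
    have h2r : (1:ℝ) ≤ 2 * r := by linarith
    have hc0 : 0 ≤ 1 - Real.cos s := le_trans (by positivity) hkey
    have : 2 / π ^ 2 * h ^ 2 ≤ 1 - Real.cos s := le_trans (by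
      have : 0 ≤ 2 / π ^ 2 := by positivity
      nlinarith) hkey
    nlinarith [sq_nonneg (1 - r)]
  have hnum : 1 - r ^ 2 ≤ 2 * (1 - r) := by nlinarith
  calc poissonKernelReal r s ≤ (2 * (1 - r)) / (2 / π ^ 2 * h ^ 2) := by
        apply div_le_div₀ (by linarith) hnum (by positivity) hdenom
    _ = π ^ 2 * (1 - r) / h ^ 2 := by
        have hπ := Real.pi_ne_zero
        field_simp

lemma exists_transition {S : ℕ → Prop} : ∀ N, ¬ S 0 → S N → ∃ k, k < N ∧ ¬ S k ∧ S (k + 1)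
  | 0, h0, hN => absurd hN h0
  | (N + 1), h0, hN => by
    by_cases hSN : S N
    · obtain ⟨k, hk, h⟩ := exists_transition N h0 hSN
      exact ⟨k, Nat.lt_succ_of_lt hk, h⟩
    · exact ⟨N, Nat.lt_succ_self N, hSN, hN⟩

def pBall (x h : ℝ) : Set ℝ :=
  Metric.closedBall x h ∪ Metric.closedBall (x - 2*π) h ∪ Metric.closedBall (x + 2*π) h

lemma pBall_meas (x h : ℝ) : MeasurableSet (pBall x h) :=
  (measurableSet_closedBall.union measurableSet_closedBall).union measurableSet_closedBall

lemma pBall_mono (x : ℝ) {a b : ℝ} (hab : a ≤ b) : pBall x a ⊆ pBall x b :=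
  union_subset_union (union_subset_union (Metric.closedBall_subset_closedBall hab)
    (Metric.closedBall_subset_closedBall hab)) (Metric.closedBall_subset_closedBall hab)

lemma pBall_out {x t h : ℝ} (ht : t ∉ pBall x h) :
    h ≤ |x - t| ∧ h ≤ |x - t - 2*π| ∧ h ≤ |x - t + 2*π| := by
  simp only [pBall, Set.mem_union, not_or, Metric.mem_closedBall, Real.dist_eq, not_le] at ht
  obtain ⟨⟨u1, u2⟩, u3⟩ := ht
  rw [abs_sub_comm] at u1
  refine ⟨u1.le, ?_, ?_⟩
  · rw [show x - t - 2*π = -(t - (x - 2*π)) by ring, abs_neg]; exact u2.le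
  · rw [show x - t + 2*π = -(t - (x + 2*π)) by ring, abs_neg]; exact u3.le

lemma four_pow_eq (k : ℕ) : ((2:ℝ)^k)^2 = 4^k := by
  rw [← pow_mul, show (4:ℝ) = 2^2 by norm_num, ← pow_mul, mul_comm]

lemma pk_pointwise {x t r : ℝ} (N : ℕ) (hx : x ∈ Ioc (-π) π) (ht : t ∈ Ioc (-π) π)
    (hr : 1/2 ≤ r) (hr1 : r < 1) :
    poissonKernelReal r (x - t) ≤
      (pBall x (1-r)).indicator (fun _ => 2/(1-r)) t
      + ((∑ k ∈ Finset.range N, (pBall x (2^(k+1)*(1-r))).indicator (fun _ => π^2/(4^k*(1-r))) t)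
      + π^2*(1-r)/(2^N*(1-r))^2) := by
  have hπ := Real.pi_pos
  have hr0 : (0:ℝ) ≤ r := by linarith
  have h1r : 0 < 1 - r := by linarith
  have hs2π : |x - t| ≤ 2 * π := by
    rw [abs_le]
    constructor <;> nlinarith [hx.1, hx.2, ht.1, ht.2]
  have hindnonneg : ∀ (c : ℝ) (S : Set ℝ), 0 ≤ c → 0 ≤ S.indicator (fun _ => c) t :=
    fun c S hc => Set.indicator_nonneg (fun _ _ => hc) t
  have hsumnonneg : 0 ≤ ∑ k ∈ Finset.range N,
      (pBall x (2^(k+1)*(1-r))).indicator (fun _ => π^2/(4^k*(1-r))) t :=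
    Finset.sum_nonneg fun k _ => hindnonneg _ _ (by positivity)
  have htail0 : (0:ℝ) ≤ π^2*(1-r)/(2^N*(1-r))^2 := by positivity
  by_cases h0 : t ∈ pBall x (1-r)
  · rw [Set.indicator_of_mem h0]
    linarith [pk_le_cap hr0 hr1 (x - t)]
  · have hi0 : 0 ≤ (pBall x (1-r)).indicator (fun _ => 2/(1-r)) t :=
      hindnonneg _ _ (by positivity)
    by_cases hN' : t ∈ pBall x (2^N*(1-r))
    · have h0' : ¬ t ∈ pBall x (2^0*(1-r)) := by simpa using h0
      obtain ⟨k, hkN, hk0, hk1⟩ :=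
        exists_transition (S := fun k => t ∈ pBall x (2^k*(1-r))) N h0' hN'
      obtain ⟨u1, u2, u3⟩ := pBall_out hk0
      have hfar := pk_le_far hr hr1 hs2π (by positivity : (0:ℝ) < 2^k*(1-r)) u1 u2 u3
      have heq : π^2 * (1-r) / (2^k*(1-r))^2 = π^2/(4^k*(1-r)) := by
        rw [mul_pow, four_pow_eq]
        rw [div_eq_div_iff (by positivity) (by positivity)]
        ring
      have hterm : π^2/(4^k*(1-r))
          ≤ ∑ j ∈ Finset.range N, (pBall x (2^(j+1)*(1-r))).indicator (fun _ => π^2/(4^j*(1-r))) t := by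
        refine le_trans (le_of_eq (Set.indicator_of_mem hk1 (fun _ => π^2/(4^k*(1-r)))).symm) ?_
        exact Finset.single_le_sum
          (f := fun j => (pBall x (2^(j+1)*(1-r))).indicator (fun _ => π^2/(4^j*(1-r))) t)
          (fun j _ => hindnonneg _ _ (by positivity)) (Finset.mem_range.2 hkN)
      calc poissonKernelReal r (x - t) ≤ π^2 * (1-r) / (2^k*(1-r))^2 := hfar
        _ = π^2/(4^k*(1-r)) := heq
        _ ≤ _ := by linarith
    · obtain ⟨u1, u2, u3⟩ := pBall_out hN'
      have hfar := pk_le_far hr hr1 hs2π (by positivity : (0:ℝ) < 2^N*(1-r)) u1 u2 u3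
      linarith

set_option maxHeartbeats 1000000 in
lemma poisson_estimate (μ : Measure ℝ) [IsFiniteMeasure μ] {x δ ε r : ℝ}
    (hx : x ∈ Ioc (-π) π) (hμc : μ (Ioc (-π) π)ᶜ = 0)
    (hball : ∀ h : ℝ, 0 < h → h ≤ δ → (μ (pBall x h)).toReal ≤ ε * h)
    (hδ : 0 < δ) (hε : 0 ≤ ε) (hr : 1/2 ≤ r) (hr1 : r < 1) (hrδ : 1 - r < δ/2) :
    ∫ t, poissonKernelReal r (x - t) ∂μ
      ≤ (2 + 4*π^2) * ε + 4*π^2 * (μ univ).toReal * (1 - r) / δ^2 := by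
  have hπ := Real.pi_pos
  have hr0 : (0:ℝ) ≤ r := by linarith
  have h1r : 0 < 1 - r := by linarith
  -- choose N with δ/2 ≤ 2^N (1-r) ≤ δ
  have hex : ∃ N : ℕ, δ/2 ≤ 2^N * (1-r) := by
    obtain ⟨n, hn⟩ := pow_unbounded_of_one_lt (δ/2/(1-r)) (y := (2:ℝ)) one_lt_two
    refine ⟨n, ?_⟩
    calc δ/2 = (δ/2/(1-r)) * (1-r) := (div_mul_cancel₀ _ h1r.ne').symm
      _ ≤ 2^n * (1-r) := mul_le_mul_of_nonneg_right hn.le h1r.le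
  classical
  set N := Nat.find hex with hNdef
  have hNspec : δ/2 ≤ 2^N * (1-r) := Nat.find_spec hex
  have hNmin : ∀ m, m < N → ¬ (δ/2 ≤ 2^m * (1-r)) := fun m hm => Nat.find_min hex hm
  have hNle : (2:ℝ)^N * (1-r) ≤ δ := by
    rcases Nat.eq_zero_or_pos N with h0 | h0
    · rw [h0]; simp only [pow_zero, one_mul]; linarith
    · have hlt := hNmin (N - 1) (by omega)
      push_neg at hlt
      have heq : (2:ℝ)^N = 2 * 2^(N-1) := by
        rw [← pow_succ']
        congr 1
        omega
      nlinarith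
  set F : ℝ → ℝ := fun t =>
    (pBall x (1-r)).indicator (fun _ => 2/(1-r)) t
      + ((∑ k ∈ Finset.range N, (pBall x (2^(k+1)*(1-r))).indicator (fun _ => π^2/(4^k*(1-r))) t)
      + π^2*(1-r)/(2^N*(1-r))^2) with hF
  -- integrability
  have hcont : Continuous fun t => poissonKernelReal r (x - t) := by
    apply Continuous.div
    · continuity
    · continuity
    · exact fun t => (pk_denom_pos hr0 hr1 (x - t)).ne'
  have hfi : Integrable (fun t => poissonKernelReal r (x - t)) μ := by
    refine Integrable.mono' (integrable_const (2/(1-r))) hcont.aestronglyMeasurable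
      (ae_of_all _ fun t => ?_)
    rw [Real.norm_eq_abs, abs_of_nonneg (pk_nonneg hr0 hr1 _)]
    exact pk_le_cap hr0 hr1 _
  have hind_int : ∀ (c : ℝ) (h : ℝ), Integrable ((pBall x h).indicator (fun _ => c)) μ :=
    fun c h => (integrable_const c).indicator (pBall_meas x h)
  have hsum_int : Integrable (fun t =>
      ∑ k ∈ Finset.range N, (pBall x (2^(k+1)*(1-r))).indicator (fun _ => π^2/(4^k*(1-r))) t) μ :=
    integrable_finset_sum _ (fun k _ => hind_int _ _)
  have hg2 : Integrable (fun t =>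
      (∑ k ∈ Finset.range N, (pBall x (2^(k+1)*(1-r))).indicator (fun _ => π^2/(4^k*(1-r))) t)
      + π^2*(1-r)/(2^N*(1-r))^2) μ := hsum_int.add (integrable_const _)
  have hFi : Integrable F μ := (hind_int _ _).add hg2
  have hae : ∀ᵐ t ∂μ, poissonKernelReal r (x - t) ≤ F t := by
    have hcar : ∀ᵐ t ∂μ, t ∈ Ioc (-π) π := by
      rw [ae_iff]
      exact hμc
    filter_upwards [hcar] with t ht using pk_pointwise N hx ht hr hr1
  have hmono := integral_mono_ae hfi hFi hae
  -- computing the integral of F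
  have hFint : ∫ t, F t ∂μ
      = (μ (pBall x (1-r))).toReal * (2/(1-r))
        + ((∑ k ∈ Finset.range N, (μ (pBall x (2^(k+1)*(1-r)))).toReal * (π^2/(4^k*(1-r))))
          + (μ univ).toReal * (π^2*(1-r)/(2^N*(1-r))^2)) := by
    rw [hF, integral_add (hind_int _ _) hg2,
      integral_add hsum_int (integrable_const _), integral_finset_sum _ (fun k _ => hind_int _ _)]
    simp only [integral_indicator_const _ (pBall_meas x _), smul_eq_mul, integral_const,
      Measure.restrict_univ, measureReal_def]
    try ring_nf
  -- bounds
  have hμB : ∀ h : ℝ, 0 < h → h ≤ δ → (μ (pBall x h)).toReal ≤ ε * h := hball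
  have hb0 : (μ (pBall x (1-r))).toReal * (2/(1-r)) ≤ 2 * ε := by
    have h1 := hμB (1-r) h1r (by linarith)
    calc (μ (pBall x (1-r))).toReal * (2/(1-r)) ≤ (ε * (1-r)) * (2/(1-r)) :=
          mul_le_mul_of_nonneg_right h1 (by positivity)
      _ = 2 * ε := by field_simp
  have hbsum : (∑ k ∈ Finset.range N, (μ (pBall x (2^(k+1)*(1-r)))).toReal * (π^2/(4^k*(1-r))))
      ≤ 4*π^2*ε := by
    have hterm : ∀ k ∈ Finset.range N,
        (μ (pBall x (2^(k+1)*(1-r)))).toReal * (π^2/(4^k*(1-r))) ≤ 2*π^2*ε * (1/2)^k := by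
      intro k hk
      have hkN : k < N := Finset.mem_range.1 hk
      have hhle : (2:ℝ)^(k+1) * (1-r) ≤ δ := by
        have : (2:ℝ)^(k+1) ≤ 2^N := pow_le_pow_right₀ one_le_two hkN
        nlinarith
      have h1 := hμB (2^(k+1)*(1-r)) (by positivity) hhle
      calc (μ (pBall x (2^(k+1)*(1-r)))).toReal * (π^2/(4^k*(1-r)))
          ≤ (ε * (2^(k+1)*(1-r))) * (π^2/(4^k*(1-r))) :=
            mul_le_mul_of_nonneg_right h1 (by positivity)
        _ = 2*π^2*ε * (1/2)^k := by
            rw [div_pow, one_pow, ← four_pow_eq]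
            field_simp
            ring
    calc (∑ k ∈ Finset.range N, (μ (pBall x (2^(k+1)*(1-r)))).toReal * (π^2/(4^k*(1-r))))
        ≤ ∑ k ∈ Finset.range N, 2*π^2*ε * (1/2)^k := Finset.sum_le_sum hterm
      _ = 2*π^2*ε * ∑ k ∈ Finset.range N, (1/2)^k := by rw [Finset.mul_sum]
      _ ≤ 2*π^2*ε * 2 := by
          have hgeo : ∑ k ∈ Finset.range N, ((1:ℝ)/2)^k ≤ 2 := by
            rw [geom_sum_eq (by norm_num : ((1:ℝ)/2) ≠ 1) N]
            have hp : (0:ℝ) ≤ (1/2)^N := by positivity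
            rw [div_le_iff_of_neg (by norm_num : ((1:ℝ)/2) - 1 < 0)]
            linarith
          exact mul_le_mul_of_nonneg_left hgeo (by positivity)
      _ = 4*π^2*ε := by ring
  have hbtail : (μ univ).toReal * (π^2*(1-r)/(2^N*(1-r))^2)
      ≤ 4*π^2 * (μ univ).toReal * (1-r) / δ^2 := by
    have hM : (0:ℝ) ≤ (μ univ).toReal := ENNReal.toReal_nonneg
    have h1 : π^2*(1-r)/(2^N*(1-r))^2 ≤ π^2*(1-r)/((δ/2)^2) := by
      apply div_le_div_of_nonneg_left (by positivity) (by positivity)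
      nlinarith [hNspec, hδ]
    calc (μ univ).toReal * (π^2*(1-r)/(2^N*(1-r))^2)
        ≤ (μ univ).toReal * (π^2*(1-r)/((δ/2)^2)) := mul_le_mul_of_nonneg_left h1 hM
      _ = 4*π^2 * (μ univ).toReal * (1-r) / δ^2 := by field_simp; ring
  calc ∫ t, poissonKernelReal r (x - t) ∂μ ≤ ∫ t, F t ∂μ := hmono
    _ = _ := hFint
    _ ≤ (2 + 4*π^2) * ε + 4*π^2 * (μ univ).toReal * (1 - r) / δ^2 := by linarith

lemma preimage_addc_closedBall (c x h : ℝ) :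
    (· + c) ⁻¹' Metric.closedBall x h = Metric.closedBall (x - c) h := by
  ext t
  simp only [Set.mem_preimage, Metric.mem_closedBall, Real.dist_eq]
  rw [show t + c - x = t - (x - c) by ring]

lemma map_translate_sing {μ : Measure ℝ} (hs : μ.MutuallySingular volume) (c : ℝ) :
    (μ.map (· + c)).MutuallySingular volume := by
  obtain ⟨s, hsm, hμs, hvs⟩ := hs
  refine ⟨(· - c) ⁻¹' s, hsm.preimage (measurable_sub_const c), ?_, ?_⟩
  · rw [Measure.map_apply (measurable_add_const c) (hsm.preimage (measurable_sub_const c))]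
    convert hμs using 2
    ext t
    simp
  · rw [← Set.preimage_compl,
      show ((· - c) : ℝ → ℝ) = (· + (-c)) from funext fun t => sub_eq_add_neg t c,
      measure_preimage_add_right]
    exact hvs

set_option maxHeartbeats 1000000 in
/-- If `μ` is a finite Borel measure on `T` (realized as a finite Borel measure on `ℝ`
carried by `(-π, π]`) that is singular with respect to Lebesgue measure, then its Poisson
integral tends to `0` almost everywhere as `r ↑ 1`: for a.e. `x ∈ (-π, π]`,
`(P_r * μ)(x) = ∫ P_r(x - t) dμ(t) → 0`. -/
theorem poisson_integral_singular_tendsto_zero (μ : Measure ℝ) [IsFiniteMeasure μ]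
    (hcarrier : μ (Ioc (-π) π)ᶜ = 0)
    (hsing : μ.MutuallySingular volume) :
    ∀ᵐ x ∂(volume.restrict (Ioc (-π) π)),
      Tendsto (fun r : ℝ => ∫ t, poissonKernelReal r (x - t) ∂μ)
        (nhdsWithin 1 (Ioo 0 1)) (nhds 0) := by
  have hπ := Real.pi_pos
  set ν : Measure ℝ := μ + (μ.map (· + 2*π) + μ.map (· + -(2*π))) with hν
  haveI h1 : IsFiniteMeasure (μ.map (· + 2*π)) :=
    Measure.isFiniteMeasure_map μ _
  haveI h2 : IsFiniteMeasure (μ.map (· + -(2*π))) :=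
    Measure.isFiniteMeasure_map μ _
  haveI hνfin : IsFiniteMeasure ν := by rw [hν]; infer_instance
  have hν_sing : ν.MutuallySingular volume :=
    (hsing.add_left ((map_translate_sing hsing _).add_left (map_translate_sing hsing _)))
  have hν_ball : ∀ x h : ℝ, μ (pBall x h) ≤ ν (Metric.closedBall x h) := by
    intro x h
    have e1 : μ.map (· + 2*π) (Metric.closedBall x h) = μ (Metric.closedBall (x - 2*π) h) := by
      rw [Measure.map_apply (measurable_add_const _) measurableSet_closedBall,
        preimage_addc_closedBall]
    have e2 : μ.map (· + -(2*π)) (Metric.closedBall x h) = μ (Metric.closedBall (x + 2*π) h) := by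
      rw [Measure.map_apply (measurable_add_const _) measurableSet_closedBall,
        preimage_addc_closedBall, sub_neg_eq_add]
    calc μ (pBall x h)
        ≤ μ (Metric.closedBall x h ∪ Metric.closedBall (x - 2*π) h)
          + μ (Metric.closedBall (x + 2*π) h) := measure_union_le _ _
      _ ≤ (μ (Metric.closedBall x h) + μ (Metric.closedBall (x - 2*π) h))
          + μ (Metric.closedBall (x + 2*π) h) := add_le_add_left (measure_union_le _ _) _
      _ = ν (Metric.closedBall x h) := by
          rw [hν]
          simp only [Measure.coe_add, Pi.add_apply, e1, e2]
          ring
  have hbes := Besicovitch.ae_tendsto_rnDeriv ν volume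
  have hrn : ν.rnDeriv volume =ᵐ[volume] 0 := hν_sing.rnDeriv_ae_eq_zero
  refine ((ae_restrict_iff' measurableSet_Ioc).2 ?_)
  filter_upwards [hbes, hrn] with x hx hx0 hxmem
  rw [hx0] at hx
  rw [Metric.tendsto_nhdsWithin_nhds]
  intro ε' hε'
  set M := (μ univ).toReal with hM
  have hMnn : 0 ≤ M := ENNReal.toReal_nonneg
  set ε := ε' / (2*(2+4*π^2)) with hεdef
  have hεpos : 0 < ε := by positivity
  -- extract δ from the vanishing derivative
  have hev := (ENNReal.tendsto_nhds_zero.mp hx) (ENNReal.ofReal (ε/2))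
    (ENNReal.ofReal_pos.2 (by positivity))
  rw [eventually_nhdsWithin_iff, Metric.eventually_nhds_iff] at hev
  obtain ⟨δ₁, hδ₁pos, hδ₁⟩ := hev
  set δ := δ₁/2 with hδdef
  have hδpos : 0 < δ := by positivity
  have hball : ∀ h : ℝ, 0 < h → h ≤ δ → (μ (pBall x h)).toReal ≤ ε * h := by
    intro h hh hhδ
    have hdist : dist h 0 < δ₁ := by
      rw [Real.dist_eq, sub_zero, abs_of_pos hh]; rw [hδdef] at hhδ; linarith
    have h1 := hδ₁ hdist (Set.mem_Ioi.2 hh)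
    rw [Real.volume_closedBall] at h1
    have hne0 : ENNReal.ofReal (2*h) ≠ 0 := (ENNReal.ofReal_pos.2 (by linarith)).ne'
    have hnetop : ENNReal.ofReal (2*h) ≠ ⊤ := ENNReal.ofReal_ne_top
    rw [ENNReal.div_le_iff hne0 hnetop] at h1
    have h3 : μ (pBall x h) ≤ ENNReal.ofReal (ε * h) := by
      refine le_trans (hν_ball x h) (le_trans h1 ?_)
      rw [← ENNReal.ofReal_mul (by positivity)]
      exact le_of_eq (by congr 1; ring)
    calc (μ (pBall x h)).toReal ≤ (ENNReal.ofReal (ε * h)).toReal :=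
          ENNReal.toReal_mono ENNReal.ofReal_ne_top h3
      _ = ε * h := ENNReal.toReal_ofReal (by positivity)
  -- choose the neighborhood of 1
  refine ⟨min (min (1/2) (δ/2)) (ε' * δ^2 / (8*π^2*(M+1))), by positivity, ?_⟩
  intro r hrIoo hrdist
  obtain ⟨hr0, hr1⟩ := hrIoo
  have h1r : 1 - r < min (min (1/2) (δ/2)) (ε' * δ^2 / (8*π^2*(M+1))) := by
    rw [Real.dist_eq, abs_of_neg (by linarith : r - 1 < 0)] at hrdist
    linarith
  have hr12 : 1/2 ≤ r := by
    have := lt_of_lt_of_le h1r (le_trans (min_le_left _ _) (min_le_left _ _))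
    linarith
  have hrδ : 1 - r < δ/2 :=
    lt_of_lt_of_le h1r (le_trans (min_le_left _ _) (min_le_right _ _))
  have hrtail : 1 - r < ε' * δ^2 / (8*π^2*(M+1)) :=
    lt_of_lt_of_le h1r (min_le_right _ _)
  have hest := poisson_estimate μ hxmem hcarrier hball hδpos hεpos.le hr12 hr1 hrδ
  have hnn : 0 ≤ ∫ t, poissonKernelReal r (x - t) ∂μ :=
    integral_nonneg fun t => pk_nonneg (by linarith) hr1 _
  rw [Real.dist_eq, sub_zero, abs_of_nonneg hnn]
  have e1 : (2 + 4*π^2) * ε = ε'/2 := by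
    rw [hεdef]; field_simp
  have e2 : 4*π^2 * M * (1 - r) / δ^2 < ε'/2 := by
    rw [div_lt_iff₀ (by positivity)]
    have key : 4*π^2 * M * (1 - r) < 4*π^2*(M+1) * (ε' * δ^2 / (8*π^2*(M+1))) := by
      have hb : 4*π^2 * M * (1 - r) ≤ 4*π^2 * M * (ε' * δ^2 / (8*π^2*(M+1))) := by
        apply mul_le_mul_of_nonneg_left hrtail.le (by positivity)
      have hc : 4*π^2 * M * (ε' * δ^2 / (8*π^2*(M+1)))
          < 4*π^2*(M+1) * (ε' * δ^2 / (8*π^2*(M+1))) := by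
        apply mul_lt_mul_of_pos_right _ (by positivity)
        nlinarith
      linarith
    have : 4*π^2*(M+1) * (ε' * δ^2 / (8*π^2*(M+1))) = ε'/2 * δ^2 := by
      field_simp
      ring
    linarith [key, this.le]
  calc ∫ t, poissonKernelReal r (x - t) ∂μ
      ≤ (2 + 4*π^2) * ε + 4*π^2 * M * (1 - r) / δ^2 := hest
    _ < ε' := by rw [e1] at *; linarith
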